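/- For large n and r ≥ 3 dividing n, the r-uniform hypergraph obtained by taking r vertex-disjoint complete r-uniform hypergraphs each on n/r vertices, together with one additional edge intersecting each clique in exactly one vertex, is connected, has minimum degree at least C(n/r - 1, r-1), but contains two vertices u, v such that the only Berge u,v-path between them has exactly one edge. -/

import Mathlib

def incGraph {α : Type*} (H : Finset (Finset α)) :
    SimpleGraph (α ⊕ {e : Finset α // e ∈ H}) where
  Adj x y :=
    match x, y with
    | Sum.inl a, Sum.inr e => a ∈ e.1
    | Sum.inr e, Sum.inl a => a ∈ e.1
    | _, _ => False
  symm := ⟨by rintro (a | e) (b | f) h <;> exact h⟩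
  loopless := ⟨by rintro (a | e) h <;> exact h⟩

def IsBergePath {α : Type*} (H : Finset (Finset α)) (ℓ : ℕ)
    (w : Fin (ℓ + 1) → α) (f : Fin ℓ → Finset α) : Prop :=
  Function.Injective w ∧ Function.Injective f ∧
    ∀ i : Fin ℓ, f i ∈ H ∧ w i.castSucc ∈ f i ∧ w i.succ ∈ f i

def HasBergePath {α : Type*} (H : Finset (Finset α)) (ℓ : ℕ) (u v : α) : Prop :=
  ∃ w f, IsBergePath H ℓ w f ∧ w 0 = u ∧ w (Fin.last ℓ) = v

/-- The `r`-uniform hypergraph on `n = r(m+1)` vertices consisting of `r` disjoint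
complete `r`-uniform hypergraphs, each on `n/r = m+1` vertices (the columns
`{i} × Fin (m+1)`), together with one extra edge meeting each clique in exactly one
vertex (the vertices `(i, 0)`). -/
def cliqueH (r m : ℕ) : Finset (Finset (Fin r × Fin (m + 1))) :=
  insert (Finset.univ.image (fun i : Fin r => (i, (0 : Fin (m + 1)))))
    (Finset.univ.filter (fun e : Finset (Fin r × Fin (m + 1)) =>
      e.card = r ∧ ∃ i : Fin r, ∀ x ∈ e, x.1 = i))

/-- For `r ≥ 3` and `n/r` large (here `n/r = m+1 ≥ r+1`), the above hypergraph is
connected, has minimum degree at least `C(n/r - 1, r-1)`, but contains two vertices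
`u ≠ v` joined by a Berge path of exactly one edge, such that every Berge `u,v`-path
has exactly one edge. -/



def spine (r m : ℕ) : Finset (Fin r × Fin (m + 1)) :=
  Finset.univ.image (fun i : Fin r => (i, (0 : Fin (m + 1))))

lemma spine_mem (r m : ℕ) : spine r m ∈ cliqueH r m := Finset.mem_insert_self _ _

lemma mem_spine {r m : ℕ} {x : Fin r × Fin (m + 1)} : x ∈ spine r m ↔ x.2 = 0 := by
  constructor
  · intro hx
    simp only [spine, Finset.mem_image, Finset.mem_univ, true_and] at hx
    obtain ⟨i, hi⟩ := hx
    rw [← hi]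
  · intro hx
    simp only [spine, Finset.mem_image, Finset.mem_univ, true_and]
    exact ⟨x.1, by rw [← hx]⟩

lemma mem_cliqueH {r m : ℕ} {e : Finset (Fin r × Fin (m + 1))} (h : e ∈ cliqueH r m) :
    e = spine r m ∨ (e.card = r ∧ ∃ i : Fin r, ∀ x ∈ e, x.1 = i) := by
  rcases Finset.mem_insert.1 h with h | h
  · exact Or.inl h
  · right
    simpa using Finset.mem_filter.1 h |>.2

lemma col_mem_cliqueH {r m : ℕ} (i : Fin r) (T : Finset (Fin (m + 1))) (hT : T.card = r) :
    T.image (fun j => (i, j)) ∈ cliqueH r m := by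
  apply Finset.mem_insert_of_mem
  rw [Finset.mem_filter]
  refine ⟨Finset.mem_univ _, ?_, i, ?_⟩
  · rw [Finset.card_image_of_injective _ (fun a b h => by simpa using h)]; exact hT
  · intro x hx
    obtain ⟨j, _, rfl⟩ := Finset.mem_image.1 hx
    rfl

lemma degree_bound {r m : ℕ} (hr : 3 ≤ r) (x : Fin r × Fin (m + 1)) :
    m.choose (r - 1) ≤ ((cliqueH r m).filter (fun e => x ∈ e)).card := by
  have hcard : ((Finset.univ.erase x.2).powersetCard (r - 1)).card = m.choose (r - 1) := by
    rw [Finset.card_powersetCard, Finset.card_erase_of_mem (Finset.mem_univ _)]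
    simp
  rw [← hcard]
  apply Finset.card_le_card_of_injOn
    (fun S => (insert x.2 S).image (fun j => (x.1, j)))
  · intro S hS
    rw [Finset.mem_coe, Finset.mem_powersetCard] at hS
    have hx2 : x.2 ∉ S := fun h => (Finset.mem_erase.1 (hS.1 h)).1 rfl
    rw [Finset.mem_coe, Finset.mem_filter]
    constructor
    · apply col_mem_cliqueH
      rw [Finset.card_insert_of_notMem hx2, hS.2]
      omega
    · exact Finset.mem_image.2 ⟨x.2, Finset.mem_insert_self _ _, rfl⟩
  · intro S hS S' hS' h
    rw [Finset.mem_coe, Finset.mem_powersetCard] at hS hS'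
    have hx2 : x.2 ∉ S := fun h => (Finset.mem_erase.1 (hS.1 h)).1 rfl
    have hx2' : x.2 ∉ S' := fun h => (Finset.mem_erase.1 (hS'.1 h)).1 rfl
    have : insert x.2 S = insert x.2 S' :=
      Finset.image_injective (f := fun j => (x.1, j)) (fun a b h => by simpa using h) h
    have := congrArg (Finset.erase · x.2) this
    simpa [Finset.erase_insert hx2, Finset.erase_insert hx2'] using this

lemma conn {r m : ℕ} (hr : 3 ≤ r) (hm : r ≤ m) : (incGraph (cliqueH r m)).Connected := by
  set G := incGraph (cliqueH r m) with hG
  set sn : (Fin r × Fin (m+1)) ⊕ {e : Finset (Fin r × Fin (m+1)) // e ∈ cliqueH r m} :=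
    Sum.inr ⟨spine r m, spine_mem r m⟩ with hsn
  have key : ∀ x : Fin r × Fin (m + 1), G.Reachable (Sum.inl x) sn := by
    intro x
    obtain ⟨T, hTsub, _, hTcard⟩ :=
      Finset.exists_subsuperset_card_eq (s := ({0, x.2} : Finset (Fin (m+1)))) (n := r)
        (Finset.subset_univ _)
        (by refine le_trans (Finset.card_insert_le _ _) ?_; simp; omega)
        (by rw [Finset.card_univ]; simp; omega)
    have he : T.image (fun j => (x.1, j)) ∈ cliqueH r m := col_mem_cliqueH x.1 T hTcard
    have hx : x ∈ T.image (fun j => (x.1, j)) :=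
      Finset.mem_image.2 ⟨x.2, hTsub (by simp), rfl⟩
    have h0 : (x.1, (0 : Fin (m+1))) ∈ T.image (fun j => (x.1, j)) :=
      Finset.mem_image.2 ⟨0, hTsub (by simp), rfl⟩
    have h1 : G.Adj (Sum.inl x) (Sum.inr ⟨_, he⟩) := hx
    have h2 : G.Adj (Sum.inr ⟨_, he⟩) (Sum.inl (x.1, (0 : Fin (m+1)))) := h0
    have h3 : G.Adj (Sum.inl (x.1, (0 : Fin (m+1)))) sn := mem_spine.2 rfl
    exact (h1.reachable.trans h2.reachable).trans h3.reachable
  have : Nonempty ((Fin r × Fin (m+1)) ⊕ {e : Finset (Fin r × Fin (m+1)) // e ∈ cliqueH r m}) := ⟨sn⟩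
  constructor
  intro a b
  have key2 : ∀ a, G.Reachable a sn := by
    rintro (x | ⟨e, he⟩)
    · exact key x
    · have hne : e.Nonempty := by
        rcases mem_cliqueH he with h | ⟨hc, _⟩
        · subst h
          exact ⟨(⟨0, by omega⟩, 0), mem_spine.2 rfl⟩
        · rw [← Finset.card_pos, hc]; omega
      obtain ⟨a, ha⟩ := hne
      have : G.Adj (Sum.inr ⟨e, he⟩) (Sum.inl a) := ha
      exact this.reachable.trans (key a)
  exact (key2 a).trans (key2 b).symm

lemma only_one {r m : ℕ} (hr : 3 ≤ r) (ℓ : ℕ)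
    (h : HasBergePath (cliqueH r m) ℓ ((⟨0, by omega⟩ : Fin r), (0 : Fin (m+1)))
      ((⟨1, by omega⟩ : Fin r), (0 : Fin (m+1)))) : ℓ = 1 := by
  obtain ⟨w, f, ⟨hw, hf, hstep⟩, hw0, hwl⟩ := h
  have seg : ∀ b (hb : b ≤ ℓ), ∀ a (ha : a ≤ b),
      (∀ t (ht : t < ℓ), a ≤ t → t < b → f ⟨t, ht⟩ ≠ spine r m) →
      (w ⟨a, by omega⟩).1 = (w ⟨b, by omega⟩).1 := by
    intro b
    induction b with
    | zero =>
      intro hb a ha _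
      have : a = 0 := by omega
      subst this; rfl
    | succ b ih =>
      intro hb a ha hns
      rcases Nat.eq_or_lt_of_le ha with rfl | ha'
      · rfl
      · have hab : a ≤ b := by omega
        have hbl : b < ℓ := by omega
        have h1 : (w ⟨a, by omega⟩).1 = (w ⟨b, by omega⟩).1 :=
          ih (by omega) a hab (fun t ht h1 h2 => hns t ht h1 (by omega))
        have hstepb := hstep ⟨b, hbl⟩
        have hnsb := hns b hbl hab (by omega)
        rcases mem_cliqueH hstepb.1 with hsp | ⟨_, i, hcol⟩
        · exact absurd hsp hnsb
        · have e1 := hcol _ hstepb.2.1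
          have e2 := hcol _ hstepb.2.2
          exact h1.trans (e1.trans e2.symm)
  have hl0 : ℓ ≠ 0 := by
    rintro rfl
    have : w 0 = w (Fin.last 0) := rfl
    rw [hw0, hwl] at this
    simp [Prod.ext_iff, Fin.ext_iff] at this
  have hex : ∃ i : Fin ℓ, f i = spine r m := by
    by_contra hno
    push_neg at hno
    have hseg := seg ℓ le_rfl 0 (Nat.zero_le _) (fun t ht _ _ => hno ⟨t, ht⟩)
    have h2 : ((⟨0, by omega⟩ : Fin r), (0 : Fin (m+1))).1
        = ((⟨1, by omega⟩ : Fin r), (0 : Fin (m+1))).1 := by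
      rw [← hw0, ← hwl]; exact hseg
    simp [Fin.ext_iff] at h2
  obtain ⟨i0, hi0⟩ := hex
  have huniq : ∀ t (ht : t < ℓ), f ⟨t, ht⟩ = spine r m → t = i0.val := by
    intro t ht hsp
    have := hf (hsp.trans hi0.symm)
    exact congrArg Fin.val this
  have hA := seg i0.val (le_of_lt i0.isLt) 0 (Nat.zero_le _)
    (fun t ht _ htb hsp => by have := huniq t ht hsp; omega)
  have hB := seg ℓ le_rfl (i0.val + 1) i0.isLt
    (fun t ht hta _ hsp => by have := huniq t ht hsp; omega)
  have hmem1 : w i0.castSucc ∈ spine r m := hi0 ▸ (hstep i0).2.1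
  have hmem2 : w i0.succ ∈ spine r m := hi0 ▸ (hstep i0).2.2
  have hu : w i0.castSucc = ((⟨0, by omega⟩ : Fin r), (0 : Fin (m+1))) := by
    refine Prod.ext ?_ (mem_spine.1 hmem1)
    exact hA.symm.trans (congrArg Prod.fst hw0)
  have hv : w i0.succ = ((⟨1, by omega⟩ : Fin r), (0 : Fin (m+1))) := by
    refine Prod.ext ?_ (mem_spine.1 hmem2)
    exact hB.trans (congrArg Prod.fst hwl)
  have e1 : i0.castSucc = 0 := hw (hu.trans hw0.symm)
  have e2 : i0.succ = Fin.last ℓ := hw (hv.trans hwl.symm)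
  have v1 := congrArg Fin.val e1
  have v2 := congrArg Fin.val e2
  simp at v1 v2
  omega

theorem stmt_15 (r m : ℕ) (hr : 3 ≤ r) (hm : r ≤ m) :
    (incGraph (cliqueH r m)).Connected ∧
    (∀ x : Fin r × Fin (m + 1),
      m.choose (r - 1) ≤ ((cliqueH r m).filter (fun e => x ∈ e)).card) ∧
    ∃ u v : Fin r × Fin (m + 1), u ≠ v ∧ HasBergePath (cliqueH r m) 1 u v ∧
      ∀ ℓ : ℕ, HasBergePath (cliqueH r m) ℓ u v → ℓ = 1 := by
  refine ⟨conn hr hm, fun x => degree_bound hr x, ⟨⟨0, by omega⟩, 0⟩, ⟨⟨1, by omega⟩, 0⟩,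
    ?_, ?_, fun ℓ h => only_one hr ℓ h⟩
  · simp [Prod.ext_iff, Fin.ext_iff]
  · refine ⟨![(⟨0, by omega⟩, 0), (⟨1, by omega⟩, 0)], ![spine r m], ⟨?_, ?_, ?_⟩, rfl, rfl⟩
    · intro a b hab
      fin_cases a <;> fin_cases b <;> simp_all [Prod.ext_iff, Fin.ext_iff]
    · exact fun a b _ => Subsingleton.elim a b
    · intro i
      fin_cases i
      exact ⟨spine_mem r m, mem_spine.2 rfl, mem_spine.2 rfl⟩
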